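/- For every real p with 1/2 < p < 1 and every natural number m, the Binomial majority-voting error rate strictly decreases when the odd ensemble size grows from 2m+1 to 2m+3: ∑_{s=0}^{m+1} C(2m+3, s) · p^s · (1−p)^{2m+3−s} < ∑_{s=0}^{m} C(2m+1, s) · p^s · (1−p)^{2m+1−s}. -/

import Mathlib

open scoped BigOperators

lemma pascal_step (p q : ℝ) (n j : ℕ) (hj : j ≤ n) :
    ∑ s ∈ Finset.range (j + 1), (((n + 1).choose s : ℝ)) * p ^ s * q ^ (n + 1 - s)
      = q * ∑ s ∈ Finset.range (j + 1), ((n.choose s : ℝ)) * p ^ s * q ^ (n - s)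
        + p * ∑ s ∈ Finset.range j, ((n.choose s : ℝ)) * p ^ s * q ^ (n - s) := by
  induction j with
  | zero => simp [pow_succ, mul_comm]
  | succ j ih =>
      have hj' : j ≤ n := Nat.le_of_succ_le hj
      rw [Finset.sum_range_succ, ih hj', Finset.sum_range_succ, Finset.sum_range_succ,
        Finset.sum_range_succ]
      have h1 : n + 1 - (j + 1) = n - j := by omega
      have h2 : n - j = (n - (j + 1)) + 1 := by omega
      have h3 : ((n + 1).choose (j + 1) : ℝ) = (n.choose j : ℝ) + (n.choose (j + 1) : ℝ) := by
        rw [Nat.choose_succ_succ]; push_cast; ring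
      rw [h1, h3, h2]
      simp only [pow_succ]
      ring

theorem binomial_majority_error_strict_decreasing (p : ℝ) (hp : 1 / 2 < p) (hp1 : p < 1)
    (m : ℕ) :
    ∑ s ∈ Finset.range (m + 2),
        ((2 * m + 3).choose s : ℝ) * p ^ s * (1 - p) ^ (2 * m + 3 - s)
      < ∑ s ∈ Finset.range (m + 1),
          ((2 * m + 1).choose s : ℝ) * p ^ s * (1 - p) ^ (2 * m + 1 - s) := by
  set q : ℝ := 1 - p with hq
  have hq0 : 0 < q := by rw [hq]; linarith
  have hp0 : 0 < p := by linarith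
  have hqp : q < p := by rw [hq]; linarith
  set E : ℝ := ∑ s ∈ Finset.range (m + 1), ((2 * m + 1).choose s : ℝ) * p ^ s * q ^ (2 * m + 1 - s) with hE
  set B : ℝ := ∑ s ∈ Finset.range m, ((2 * m + 1).choose s : ℝ) * p ^ s * q ^ (2 * m + 1 - s) with hB
  set A : ℝ := ∑ s ∈ Finset.range (m + 2), ((2 * m + 1).choose s : ℝ) * p ^ s * q ^ (2 * m + 1 - s) with hA
  have step1 : ∑ s ∈ Finset.range (m + 2),
      ((2 * m + 3).choose s : ℝ) * p ^ s * q ^ (2 * m + 3 - s)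
      = q * (∑ s ∈ Finset.range (m + 2), ((2 * m + 2).choose s : ℝ) * p ^ s * q ^ (2 * m + 2 - s))
        + p * (∑ s ∈ Finset.range (m + 1), ((2 * m + 2).choose s : ℝ) * p ^ s * q ^ (2 * m + 2 - s)) := by
    have h := pascal_step p q (2 * m + 2) (m + 1) (by omega)
    have e1 : 2 * m + 2 + 1 = 2 * m + 3 := by omega
    rw [e1] at h
    exact h
  have step2 : ∑ s ∈ Finset.range (m + 2),
      ((2 * m + 2).choose s : ℝ) * p ^ s * q ^ (2 * m + 2 - s) = q * A + p * E := by
    have h := pascal_step p q (2 * m + 1) (m + 1) (by omega)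
    have e1 : 2 * m + 1 + 1 = 2 * m + 2 := by omega
    rw [e1] at h
    exact h
  have step3 : ∑ s ∈ Finset.range (m + 1),
      ((2 * m + 2).choose s : ℝ) * p ^ s * q ^ (2 * m + 2 - s) = q * E + p * B := by
    have h := pascal_step p q (2 * m + 1) m (by omega)
    have e1 : 2 * m + 1 + 1 = 2 * m + 2 := by omega
    rw [e1] at h
    exact h
  set C : ℝ := ((2 * m + 1).choose m : ℝ) with hC
  have hsymm : ((2 * m + 1).choose (m + 1) : ℝ) = C := by
    rw [hC]
    norm_cast
    have h : (2 * m + 1) - (m + 1) = m := by omega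
    calc (2 * m + 1).choose (m + 1)
        = (2 * m + 1).choose ((2 * m + 1) - (m + 1)) := (Nat.choose_symm (by omega)).symm
      _ = (2 * m + 1).choose m := by rw [h]
  have hAE : A = E + C * p ^ (m + 1) * q ^ m := by
    have e1 : 2 * m + 1 - (m + 1) = m := by omega
    rw [hA, Finset.sum_range_succ, ← hE, e1, hsymm]
  have hEB : E = B + C * p ^ m * q ^ (m + 1) := by
    have e1 : 2 * m + 1 - m = m + 1 := by omega
    rw [hE, Finset.sum_range_succ, ← hB, e1, ← hC]
  have hCpos : 0 < C := by
    rw [hC]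
    exact_mod_cast Nat.choose_pos (by omega)
  rw [step1, step2, step3, hAE, hEB]
  have key : q * (C * p ^ (m + 1) * q ^ m) * q < p * (C * p ^ m * q ^ (m + 1)) * p := by
    have hXpos : 0 < C * p ^ (m + 1) * q ^ (m + 1) :=
      mul_pos (mul_pos hCpos (pow_pos hp0 _)) (pow_pos hq0 _)
    have h1 : C * p ^ (m + 1) * q ^ (m + 1) * q < C * p ^ (m + 1) * q ^ (m + 1) * p :=
      (mul_lt_mul_iff_right₀ hXpos).mpr hqp
    calc q * (C * p ^ (m + 1) * q ^ m) * q = C * p ^ (m + 1) * q ^ (m + 1) * q := by ring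
      _ < C * p ^ (m + 1) * q ^ (m + 1) * p := h1
      _ = p * (C * p ^ m * q ^ (m + 1)) * p := by ring
  have hfin : q * (q * (B + C * p ^ m * q ^ (m + 1) + C * p ^ (m + 1) * q ^ m)
        + p * (B + C * p ^ m * q ^ (m + 1)))
      + p * (q * (B + C * p ^ m * q ^ (m + 1)) + p * B)
      = (B + C * p ^ m * q ^ (m + 1))
        + (q * (C * p ^ (m + 1) * q ^ m) * q - p * (C * p ^ m * q ^ (m + 1)) * p) := by
    rw [hq]; ring
  rw [hfin]
  linarith [key]
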